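/- The quantity #STST(w) + #TSTS(w), counting subsequence occurrences, is invariant under cyclic rotation of the word w. -/

import Mathlib

inductive Letter | S | T
deriving DecidableEq, Repr

open Letter

/-- Number of occurrences of `u` as a (not necessarily contiguous) subsequence of `w`. -/
def cnt (u w : List Letter) : ℕ := w.sublists.count u

lemma count_beq_bridge (u : List Letter) (l : List (List Letter)) :
    l.count u = @List.count _ instBEqOfDecidableEq u l := by
  induction l with
  | nil => rfl
  | cons a l ih =>
    rw [List.count_cons, @List.count_cons _ instBEqOfDecidableEq, ih]
    congr 1
    simp

lemma cnt_eq_sublists' (u w : List Letter) :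
    cnt u w = @List.count _ instBEqOfDecidableEq u w.sublists' := by
  rw [cnt, count_beq_bridge]
  rw [← count_beq_bridge, ← count_beq_bridge]
  exact (w.sublists_perm_sublists').count_eq u

lemma cnt_rev (u w : List Letter) : cnt u.reverse w.reverse = cnt u w := by
  rw [cnt_eq_sublists', List.sublists'_reverse, cnt, count_beq_bridge]
  rw [← count_beq_bridge, ← count_beq_bridge]
  exact List.count_map_of_injective w.sublists List.reverse List.reverse_injective u

lemma cnt_cons_eq (x : Letter) (u t : List Letter) :
    cnt (x::u) (x::t) = cnt (x::u) t + cnt u t := by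
  rw [cnt_eq_sublists', cnt_eq_sublists', List.sublists'_cons, @List.count_append _ instBEqOfDecidableEq]
  congr 1
  rw [cnt_eq_sublists']
  rw [← count_beq_bridge, ← count_beq_bridge]
  exact (List.count_map_of_injective t.sublists' (x :: ·)
    (fun a b h => by simpa using h) u).symm ▸ rfl

lemma cnt_cons_ne (x y : Letter) (h : x ≠ y) (u t : List Letter) :
    cnt (x::u) (y::t) = cnt (x::u) t := by
  rw [cnt_eq_sublists', cnt_eq_sublists', List.sublists'_cons, @List.count_append _ instBEqOfDecidableEq]
  have hz : @List.count _ instBEqOfDecidableEq (x::u)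
      (t.sublists'.map (y :: ·)) = 0 := by
    refine @List.count_eq_zero_of_not_mem _ instBEqOfDecidableEq _ _ _ ?_
    simp only [List.mem_map]
    rintro ⟨s, -, hs⟩
    exact h (by injection hs.symm)
  rw [hz, Nat.add_zero]

lemma cnt_snoc (x : Letter) (u t : List Letter) :
    cnt u (t ++ [x]) = cnt (u.reverse) (x :: t.reverse) := by
  rw [← cnt_rev u.reverse (x :: t.reverse)]
  simp

theorem stmt4 (w : List Letter) :
    cnt [S,T,S,T] (w.rotate 1) + cnt [T,S,T,S] (w.rotate 1)
      = cnt [S,T,S,T] w + cnt [T,S,T,S] w := by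
  cases w with
  | nil => rfl
  | cons a t =>
    rw [List.rotate_cons_succ, List.rotate_zero]
    have hST : ([S,T,S,T] : List Letter).reverse = [T,S,T,S] := rfl
    have hTS : ([T,S,T,S] : List Letter).reverse = [S,T,S,T] := rfl
    have h1 := cnt_snoc a [S,T,S,T] t
    have h2 := cnt_snoc a [T,S,T,S] t
    rw [hST] at h1; rw [hTS] at h2
    have e1 : cnt [T,S,T,S] t.reverse = cnt [S,T,S,T] t := by
      rw [← hST, cnt_rev]
    have e2 : cnt [S,T,S,T] t.reverse = cnt [T,S,T,S] t := by
      rw [← hTS, cnt_rev]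
    cases a with
    | S =>
      rw [h1, h2, cnt_cons_ne T S (by simp) [S,T,S] t.reverse,
        cnt_cons_eq S [T,S,T] t.reverse,
        cnt_cons_eq S [T,S,T] t, cnt_cons_ne T S (by simp) [S,T,S] t]
      have e3 : cnt [T,S,T] t.reverse = cnt [T,S,T] t := by
        have := cnt_rev [T,S,T] t.reverse; simpa using this.symm
      omega
    | T =>
      rw [h1, h2, cnt_cons_eq T [S,T,S] t.reverse,
        cnt_cons_ne S T (by simp) [T,S,T] t.reverse,
        cnt_cons_ne S T (by simp) [T,S,T] t, cnt_cons_eq T [S,T,S] t]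
      have e3 : cnt [S,T,S] t.reverse = cnt [S,T,S] t := by
        have := cnt_rev [S,T,S] t.reverse; simpa using this.symm
      omega
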